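/- Let A be a real symmetric n x n matrix with an eigenvalue lambda satisfying |lambda| > spectral radius of a principal submatrix A_R, where A is partitioned into blocks with index sets L and R such that the L-R block is the all-ones matrix J and the R-L block is J transpose: A = [[A_L, J],[J^T, A_R]]. If alpha = (alpha_L, alpha_R) is an eigenvector of A with eigenvalue lambda, then alpha_R = (1^T alpha_L) * sum_{k=0}^infty lambda^{-(k+1)} A_R^k 1, where 1 is the all-ones vector. -/

import Mathlib

open Matrix

/-- For a symmetric block matrix `A = [[A_L, J], [Jᵀ, A_R]]` with `J` the all-ones block, an
eigenvalue `λ` with `|λ|` larger than every spectral value of `A_R`, and eigenvector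
`α = (α_L, α_R)`, one has `α_R = (1ᵀ α_L) ∑_{k≥0} λ^{-(k+1)} A_R^k 1`. -/
theorem eigenvector_neumann_series (p m : ℕ)
    (AL : Matrix (Fin p) (Fin p) ℝ) (AR : Matrix (Fin m) (Fin m) ℝ)
    (hAL : AL.IsSymm) (hAR : AR.IsSymm) (lam : ℝ)
    (hrad : ∀ μ ∈ spectrum ℝ AR, |μ| < |lam|)
    (α : Fin p ⊕ Fin m → ℝ) (hα : α ≠ 0)
    (heig : (Matrix.fromBlocks AL (Matrix.of fun _ _ => (1 : ℝ))
        (Matrix.of fun _ _ => (1 : ℝ)) AR) *ᵥ α = lam • α) :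
    (fun j => α (Sum.inr j)) =
      (∑ i, α (Sum.inl i)) • ∑' k : ℕ, (lam ^ (k + 1))⁻¹ • (AR ^ k *ᵥ fun _ => (1 : ℝ)) := by
  rcases Nat.eq_zero_or_pos m with hm | hm
  · subst hm; funext j; exact j.elim0
  have hH : AR.IsHermitian := by
    unfold Matrix.IsHermitian
    rw [conjTranspose]
    exact Matrix.ext fun i j => by simp [hAR.apply i j]
  set B := hH.eigenvectorBasis with hB
  set μ := hH.eigenvalues with hμdef
  have hμ : ∀ j, |μ j| < |lam| := fun j => hrad _ (hH.eigenvalues_mem_spectrum_real j)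
  have hlamabs : 0 < |lam| := lt_of_le_of_lt (abs_nonneg _) (hμ ⟨0, hm⟩)
  have hlam0 : lam ≠ 0 := fun h => by simp [h] at hlamabs
  have hne : ∀ j, lam - μ j ≠ 0 := by
    intro j h
    have h2 := hμ j
    rw [← sub_eq_zero.mp h] at h2
    exact absurd h2 (lt_irrefl _)
  set c : Fin m → ℝ := fun j => B.repr ((WithLp.equiv 2 _).symm fun _ => (1 : ℝ)) j with hc
  -- powers act on eigenvectors
  have key1 : ∀ (k : ℕ) (j : Fin m), AR ^ k *ᵥ ⇑(B j) = μ j ^ k • ⇑(B j) := by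
    intro k j
    induction k with
    | zero => simp
    | succ k ih =>
      rw [pow_succ', ← mulVec_mulVec, ih, mulVec_smul, hH.mulVec_eigenvectorBasis,
        smul_smul, ← pow_succ]
  -- decomposition of the all-ones vector
  have key2 : (fun _ => (1 : ℝ)) = ∑ j, c j • ⇑(B j) := by
    have h := B.sum_repr ((WithLp.equiv 2 _).symm fun _ => (1 : ℝ))
    funext i
    have h2 := congrArg (EuclideanSpace.projₗ (𝕜 := ℝ) i) h
    simp only [map_sum, _root_.map_smul] at h2
    simp only [Finset.sum_apply, Pi.smul_apply] at h2 ⊢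
    simpa [EuclideanSpace.projₗ, PiLp.projₗ, hc, WithLp.equiv_symm_apply] using h2.symm
  have key3 : ∀ k : ℕ, AR ^ k *ᵥ (fun _ => (1 : ℝ)) = ∑ j, (c j * μ j ^ k) • ⇑(B j) := by
    intro k
    calc AR ^ k *ᵥ (fun _ => (1 : ℝ)) = (AR ^ k).mulVecLin (∑ j, c j • ⇑(B j)) := by
          rw [mulVecLin_apply, key2]
      _ = ∑ j, c j • (AR ^ k *ᵥ ⇑(B j)) := by
          rw [map_sum]; simp only [_root_.map_smul, mulVecLin_apply]
      _ = ∑ j, (c j * μ j ^ k) • ⇑(B j) := by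
          simp only [key1, smul_smul]
  -- geometric scalar series
  have hr : ∀ j, |μ j * lam⁻¹| < 1 := by
    intro j
    rw [abs_mul, abs_inv, ← div_eq_mul_inv, div_lt_one hlamabs]
    exact hμ j
  have hgeq : ∀ (j : Fin m) (k : ℕ),
      (lam ^ (k + 1))⁻¹ * (c j * μ j ^ k) = (c j * lam⁻¹) * (μ j * lam⁻¹) ^ k := by
    intro j k
    rw [pow_succ, mul_inv, mul_pow, ← inv_pow]
    ring
  have hsum_g : ∀ j, Summable (fun k : ℕ => (lam ^ (k + 1))⁻¹ * (c j * μ j ^ k)) := by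
    intro j
    simp only [hgeq]
    exact (summable_geometric_of_abs_lt_one (hr j)).mul_left _
  have htsum_g : ∀ j, (∑' k : ℕ, (lam ^ (k + 1))⁻¹ * (c j * μ j ^ k))
      = c j * (lam - μ j)⁻¹ := by
    intro j
    simp only [hgeq]
    rw [tsum_mul_left, tsum_geometric_of_abs_lt_one (hr j)]
    rw [mul_assoc]
    congr 1
    rw [← mul_inv]
    congr 1
    field_simp
  -- rewrite the summand
  have hterm : ∀ k : ℕ, (lam ^ (k + 1))⁻¹ • (AR ^ k *ᵥ fun _ => (1 : ℝ))
      = ∑ j, ((lam ^ (k + 1))⁻¹ * (c j * μ j ^ k)) • ⇑(B j) := by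
    intro k
    rw [key3, Finset.smul_sum]
    simp only [smul_smul]
  have hS : Summable (fun k : ℕ => (lam ^ (k + 1))⁻¹ • (AR ^ k *ᵥ fun _ => (1 : ℝ))) := by
    simp only [hterm]
    exact summable_sum fun j _ => (hsum_g j).smul_const _
  have hT : (∑' k : ℕ, (lam ^ (k + 1))⁻¹ • (AR ^ k *ᵥ fun _ => (1 : ℝ)))
      = ∑ j, (c j * (lam - μ j)⁻¹) • ⇑(B j) := by
    calc (∑' k : ℕ, (lam ^ (k + 1))⁻¹ • (AR ^ k *ᵥ fun _ => (1 : ℝ)))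
        = ∑' k : ℕ, ∑ j, ((lam ^ (k + 1))⁻¹ * (c j * μ j ^ k)) • ⇑(B j) := by
          simp only [hterm]
      _ = ∑ j, ∑' k : ℕ, ((lam ^ (k + 1))⁻¹ * (c j * μ j ^ k)) • ⇑(B j) := by
          exact Summable.tsum_finsetSum fun j _ => (hsum_g j).smul_const _
      _ = ∑ j, (c j * (lam - μ j)⁻¹) • ⇑(B j) := by
          refine Finset.sum_congr rfl fun j _ => ?_
          rw [Summable.tsum_smul_const (hsum_g j), htsum_g j]
  -- the eigen-equation in the R block
  have heq2 : lam • (fun j => α (Sum.inr j)) - AR *ᵥ (fun j => α (Sum.inr j))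
      = (∑ i, α (Sum.inl i)) • (fun _ => (1 : ℝ)) := by
    funext j
    have h := congrFun heig (Sum.inr j)
    simp only [mulVec, dotProduct, Fintype.sum_sum_type, fromBlocks_apply₂₁,
      fromBlocks_apply₂₂, of_apply, one_mul, Pi.smul_apply, smul_eq_mul] at h
    simp only [Pi.sub_apply, Pi.smul_apply, smul_eq_mul, mulVec, dotProduct]
    linarith [h]
  -- the invertible matrix
  set M : Matrix (Fin m) (Fin m) ℝ := lam • 1 - AR with hM
  have hMunit : IsUnit M := by
    have hnotmem : lam ∉ spectrum ℝ AR := fun h => absurd (hrad lam h) (lt_irrefl _)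
    rw [spectrum.mem_iff, not_not] at hnotmem
    rwa [Algebra.algebraMap_eq_smul_one] at hnotmem
  have hinj : Function.Injective M.mulVec := mulVec_injective_iff_isUnit.2 hMunit
  have hMv : ∀ v : Fin m → ℝ, M *ᵥ v = lam • v - AR *ᵥ v := by
    intro v
    rw [hM, sub_mulVec, smul_mulVec, one_mulVec]
  apply hinj
  rw [hMv, heq2, mulVec_smul, hMv, hT]
  congr 1
  have hAv : AR *ᵥ (∑ j, (c j * (lam - μ j)⁻¹) • ⇑(B j))
      = ∑ j, ((c j * (lam - μ j)⁻¹) * μ j) • ⇑(B j) := by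
    rw [← mulVecLin_apply, map_sum]
    simp only [_root_.map_smul, mulVecLin_apply, hH.mulVec_eigenvectorBasis, smul_smul]
    exact Finset.sum_congr rfl fun j _ => by rw [hH.mulVec_eigenvectorBasis, smul_smul]
  rw [hAv, Finset.smul_sum, ← Finset.sum_sub_distrib, key2]
  refine Finset.sum_congr rfl fun j _ => ?_
  rw [smul_smul, ← sub_smul]
  congr 1
  field_simp [hne j]
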